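/- For all integers b ≥ 2 and 1 ≤ k ≤ b−1, the number of permutations σ of {1,...,b} that are a single cycle on all b elements (a cyclic permutation whose support is all of {1,...,b}) and satisfy σ(b−k+1) < σ(b−k+2) < ··· < σ(b) equals (b−1)!/k!; that is, k! times this count equals (b−1)!. Equivalently, the probability that a uniformly random b-cycle σ has L(σ) ≥ k is 1/k!. -/

import Mathlib

open Equiv Equiv.Perm Finset

namespace Stmt14

variable {b : ℕ}

/-- exit time: least `n` with `(σ^(n+1)) s` below `c`. -/
noncomputable def eT (c : ℕ) (σ : Perm (Fin b)) (s : Fin b) : ℕ :=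
  sInf {n : ℕ | ((σ ^ (n + 1)) s).val < c}

/-- the key invariant: exit time together with exit value, lexicographically. -/
noncomputable def key (c : ℕ) (σ : Perm (Fin b)) (s : Fin b) : ℕ ×ₗ Fin b :=
  toLex (eT c σ s, (σ ^ (eT c σ s + 1)) s)

/-- increasing on the top part -/
def Incr (c : ℕ) (σ : Perm (Fin b)) : Prop :=
  ∀ s t : Fin b, c ≤ s.val → s < t → σ s < σ t

section basic

variable {c : ℕ} {σ : Perm (Fin b)}

lemma pow_succ_apply (n : ℕ) (s : Fin b) : (σ ^ (n + 1)) s = (σ ^ n) (σ s) := by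
  rw [pow_succ, Equiv.Perm.mul_apply]

lemma exit_lt (hex : ∀ s : Fin b, ∃ n : ℕ, ((σ ^ (n + 1)) s).val < c) (s : Fin b) :
    ((σ ^ (eT c σ s + 1)) s).val < c :=
  Nat.sInf_mem (hex s)

lemma not_lt_of_lt_eT {s : Fin b} {j : ℕ} (hj : j < eT c σ s) :
    c ≤ ((σ ^ (j + 1)) s).val :=
  not_lt.mp (Nat.notMem_of_lt_sInf (s := {n : ℕ | ((σ ^ (n + 1)) s).val < c}) hj)

lemma high_apply_of_eT_pos {s : Fin b} (h : 0 < eT c σ s) : c ≤ (σ s).val := by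
  have := not_lt_of_lt_eT (σ := σ) (s := s) (j := 0) h
  rwa [pow_one] at this

lemma low_apply_of_eT_zero (hex : ∀ s : Fin b, ∃ n : ℕ, ((σ ^ (n + 1)) s).val < c)
    {s : Fin b} (h : eT c σ s = 0) : (σ s).val < c := by
  have := exit_lt hex s
  rwa [h, pow_one] at this

lemma eT_step (hex : ∀ s : Fin b, ∃ n : ℕ, ((σ ^ (n + 1)) s).val < c)
    {s : Fin b} (h : c ≤ (σ s).val) :
    eT c σ s = eT c σ (σ s) + 1 ∧
      (σ ^ (eT c σ s + 1)) s = (σ ^ (eT c σ (σ s) + 1)) (σ s) := by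
  have hpos : 0 < eT c σ s := by
    rcases Nat.eq_zero_or_pos (eT c σ s) with h0 | h0
    · exact absurd (low_apply_of_eT_zero hex h0) (not_lt.mpr h)
    · exact h0
  obtain ⟨m, hm⟩ : ∃ m, eT c σ s = m + 1 := ⟨eT c σ s - 1, by omega⟩
  have hmem : m ∈ {n : ℕ | ((σ ^ (n + 1)) (σ s)).val < c} := by
    have := exit_lt hex s
    rw [hm] at this
    simpa [← pow_succ_apply] using this
  have hle : eT c σ (σ s) ≤ m := Nat.sInf_le hmem
  have hge : m ≤ eT c σ (σ s) := by
    by_contra hcon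
    push_neg at hcon
    have hmem' : eT c σ (σ s) ∈ {n : ℕ | ((σ ^ (n + 1)) (σ s)).val < c} :=
      Nat.sInf_mem ⟨m, hmem⟩
    have : c ≤ ((σ ^ (eT c σ (σ s) + 1 + 1)) s).val := by
      apply not_lt_of_lt_eT
      omega
    rw [pow_succ_apply (eT c σ (σ s) + 1) s] at this
    exact absurd hmem' (by simpa using not_lt.mpr this)
  have heq : eT c σ (σ s) = m := le_antisymm hle hge
  constructor
  · omega
  · rw [heq, hm, pow_succ_apply (m + 1) s]

lemma key_inj {s t : Fin b} (h : key c σ s = key c σ t) : s = t := by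
  unfold key at h
  have h1 : eT c σ s = eT c σ t := congrArg (fun p => (ofLex p).1) h
  have h2 : (σ ^ (eT c σ s + 1)) s = (σ ^ (eT c σ t + 1)) t :=
    congrArg (fun p => (ofLex p).2) h
  rw [h1] at h2
  exact (σ ^ (eT c σ t + 1)).injective h2

lemma key_lt_iff {s t : Fin b} :
    key c σ s < key c σ t ↔ eT c σ s < eT c σ t ∨
      (eT c σ s = eT c σ t ∧ (σ ^ (eT c σ s + 1)) s < (σ ^ (eT c σ t + 1)) t) := by
  unfold key
  rw [Prod.Lex.lt_iff]
  exact Iff.rfl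

end basic

section mono

variable {c : ℕ} {σ : Perm (Fin b)}

lemma incr_lt_iff (hI : Incr c σ) {s t : Fin b} (hs : c ≤ s.val) (ht : c ≤ t.val) :
    s < t ↔ σ s < σ t := by
  constructor
  · exact hI s t hs
  · intro h
    rcases lt_trichotomy s t with h' | h' | h'
    · exact h'
    · exact absurd h (by rw [h']; exact lt_irrefl _)
    · exact absurd (hI t s ht h') (not_lt.mpr h.le)

lemma key_lt_imp (hex : ∀ s : Fin b, ∃ n : ℕ, ((σ ^ (n + 1)) s).val < c)
    (hI : Incr c σ) :
    ∀ N (s t : Fin b), c ≤ s.val → c ≤ t.val → eT c σ s = N →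
      key c σ s < key c σ t → s < t := by
  intro N
  induction N using Nat.strong_induction_on with
  | _ N IH =>
    intro s t hs ht hN hlt
    rw [key_lt_iff] at hlt
    rcases hlt with hmm | ⟨hmm, hee⟩
    · -- eT s < eT t
      have htpos : 0 < eT c σ t := lt_of_le_of_lt (Nat.zero_le _) hmm
      have hσt : c ≤ (σ t).val := high_apply_of_eT_pos htpos
      rcases Nat.eq_zero_or_pos (eT c σ s) with h0 | h0
      · have hσs : (σ s).val < c := low_apply_of_eT_zero hex h0
        have : σ s < σ t := by
          rw [Fin.lt_def]; omega
        exact (incr_lt_iff hI hs ht).mpr this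
      · have hσs : c ≤ (σ s).val := high_apply_of_eT_pos h0
        obtain ⟨hseq, hsval⟩ := eT_step hex hσs
        obtain ⟨hteq, htval⟩ := eT_step hex hσt
        have hkey : key c σ (σ s) < key c σ (σ t) := by
          rw [key_lt_iff]
          left; omega
        have : σ s < σ t :=
          IH (eT c σ (σ s)) (by omega) (σ s) (σ t) hσs hσt rfl hkey
        exact (incr_lt_iff hI hs ht).mpr this
    · -- equal times, compare exit values
      rcases Nat.eq_zero_or_pos (eT c σ s) with h0 | h0
      · have h0' : eT c σ t = 0 := by omega
        rw [h0, pow_one] at hee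
        rw [h0', pow_one] at hee
        exact (incr_lt_iff hI hs ht).mpr hee
      · have hσs : c ≤ (σ s).val := high_apply_of_eT_pos h0
        have hσt : c ≤ (σ t).val := high_apply_of_eT_pos (by omega)
        obtain ⟨hseq, hsval⟩ := eT_step hex hσs
        obtain ⟨hteq, htval⟩ := eT_step hex hσt
        have hkey : key c σ (σ s) < key c σ (σ t) := by
          rw [key_lt_iff]
          right
          constructor
          · omega
          · rw [← hsval, ← htval]
            exact hee
        have : σ s < σ t :=
          IH (eT c σ (σ s)) (by omega) (σ s) (σ t) hσs hσt rfl hkey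
        exact (incr_lt_iff hI hs ht).mpr this

lemma key_iff_of_incr (hex : ∀ s : Fin b, ∃ n : ℕ, ((σ ^ (n + 1)) s).val < c)
    (hI : Incr c σ) {s t : Fin b} (hs : c ≤ s.val) (ht : c ≤ t.val) :
    key c σ s < key c σ t ↔ s < t := by
  constructor
  · exact key_lt_imp hex hI _ s t hs ht rfl
  · intro h
    rcases lt_trichotomy (key c σ s) (key c σ t) with h' | h' | h'
    · exact h'
    · exact absurd (key_inj h') h.ne
    · exact absurd (key_lt_imp hex hI _ t s ht hs rfl h') (not_lt.mpr h.le)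

lemma incr_of_key_iff (hex : ∀ s : Fin b, ∃ n : ℕ, ((σ ^ (n + 1)) s).val < c)
    (hK : ∀ s t : Fin b, c ≤ s.val → c ≤ t.val → (key c σ s < key c σ t ↔ s < t)) :
    Incr c σ := by
  intro s t hs hst
  have ht : c ≤ t.val := by
    have := Fin.lt_def.mp hst; omega
  have hlt : key c σ s < key c σ t := (hK s t hs ht).mpr hst
  rw [key_lt_iff] at hlt
  rcases hlt with hmm | ⟨hmm, hee⟩
  · have htpos : 0 < eT c σ t := lt_of_le_of_lt (Nat.zero_le _) hmm
    have hσt : c ≤ (σ t).val := high_apply_of_eT_pos htpos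
    rcases Nat.eq_zero_or_pos (eT c σ s) with h0 | h0
    · have hσs : (σ s).val < c := low_apply_of_eT_zero hex h0
      rw [Fin.lt_def]; omega
    · have hσs : c ≤ (σ s).val := high_apply_of_eT_pos h0
      obtain ⟨hseq, hsval⟩ := eT_step hex hσs
      obtain ⟨hteq, htval⟩ := eT_step hex hσt
      apply (hK (σ s) (σ t) hσs hσt).mp
      rw [key_lt_iff]
      left; omega
  · rcases Nat.eq_zero_or_pos (eT c σ s) with h0 | h0
    · have h0' : eT c σ t = 0 := by omega
      rw [h0, pow_one] at hee
      rw [h0', pow_one] at hee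
      exact hee
    · have hσs : c ≤ (σ s).val := high_apply_of_eT_pos h0
      have hσt : c ≤ (σ t).val := high_apply_of_eT_pos (by omega)
      obtain ⟨hseq, hsval⟩ := eT_step hex hσs
      obtain ⟨hteq, htval⟩ := eT_step hex hσt
      apply (hK (σ s) (σ t) hσs hσt).mp
      rw [key_lt_iff]
      right
      refine ⟨by omega, ?_⟩
      rw [← hsval, ← htval]
      exact hee

end mono

section conj

variable {c : ℕ} {σ π : Perm (Fin b)}

lemma fix_inv (hπ : ∀ x : Fin b, x.val < c → π x = x) :
    ∀ x : Fin b, x.val < c → π⁻¹ x = x := by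
  intro x hx
  have := hπ x hx
  calc π⁻¹ x = π⁻¹ (π x) := by rw [this]
  _ = x := π.symm_apply_apply x

lemma high_preserve (hπ : ∀ x : Fin b, x.val < c → π x = x) :
    ∀ x : Fin b, c ≤ x.val → c ≤ (π x).val := by
  intro x hx
  by_contra hcon
  push_neg at hcon
  have h1 : π (π x) = π x := hπ (π x) hcon
  have h2 : π x = x := π.injective h1
  omega

lemma key_conj (hex : ∀ s : Fin b, ∃ n : ℕ, ((σ ^ (n + 1)) s).val < c)
    (hπ : ∀ x : Fin b, x.val < c → π x = x) (s : Fin b) :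
    key c (π * σ * π⁻¹) s = key c σ (π⁻¹ s) := by
  have hπinv : ∀ x : Fin b, x.val < c → π⁻¹ x = x := fix_inv hπ
  have happ : ∀ n : ℕ, ((π * σ * π⁻¹) ^ (n + 1)) s = π ((σ ^ (n + 1)) (π⁻¹ s)) := by
    intro n
    rw [conj_pow]
    simp [Equiv.Perm.mul_apply]
  have hsets : {n : ℕ | (((π * σ * π⁻¹) ^ (n + 1)) s).val < c}
      = {n : ℕ | ((σ ^ (n + 1)) (π⁻¹ s)).val < c} := by
    ext n
    simp only [Set.mem_setOf_eq, happ n]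
    constructor
    · intro h
      by_contra hcon
      push_neg at hcon
      exact absurd (high_preserve hπ _ hcon) (not_le.mpr h)
    · intro h
      rw [hπ _ h]
      exact h
  have heT : eT c (π * σ * π⁻¹) s = eT c σ (π⁻¹ s) := by
    unfold eT
    rw [hsets]
  unfold key
  rw [heT, happ, hπ _ (exit_lt hex (π⁻¹ s))]

end conj

section strictmono

lemma perm_apply_inv_self (e : Perm (Fin b)) (x : Fin b) : e (e⁻¹ x) = x :=
  e.apply_symm_apply x

lemma perm_le_apply_of_strictMono {e : Perm (Fin b)} (he : StrictMono (e : Fin b → Fin b)) :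
    ∀ x : Fin b, x ≤ e x := by
  suffices h : ∀ n (x : Fin b), x.val = n → x ≤ e x by
    intro x; exact h x.val x rfl
  intro n
  induction n using Nat.strong_induction_on with
  | _ n IH =>
    intro x hx
    by_contra hcon
    push_neg at hcon
    have h1 : e x ≤ e (e x) := IH (e x).val (by omega) (e x) rfl
    have h2 : e (e x) < e x := he hcon
    exact absurd h1 (not_le.mpr h2)

lemma perm_eq_one_of_strictMono {e : Perm (Fin b)} (he : StrictMono (e : Fin b → Fin b)) :
    e = 1 := by
  have hinv : StrictMono ((e⁻¹ : Perm (Fin b)) : Fin b → Fin b) := by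
    intro x y hxy
    rcases lt_trichotomy (e⁻¹ x) (e⁻¹ y) with h | h | h
    · exact h
    · have hxy' : x = y := by
        have h2 := congrArg e h
        simpa [perm_apply_inv_self] using h2
      exact absurd hxy (by rw [hxy']; exact lt_irrefl y)
    · have h2 := he h
      rw [perm_apply_inv_self, perm_apply_inv_self] at h2
      exact absurd hxy (not_lt.mpr h2.le)
  ext x
  have h1 : x ≤ e x := perm_le_apply_of_strictMono he x
  have h2 : x ≤ e⁻¹ x := perm_le_apply_of_strictMono hinv x
  have h3 : e x ≤ e (e⁻¹ x) := he.monotone h2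
  rw [perm_apply_inv_self] at h3
  have h4 := le_antisymm h1 h3
  rw [Equiv.Perm.one_apply]
  exact congrArg Fin.val h4.symm

end strictmono

section cyclefacts

variable {c : ℕ} {σ π : Perm (Fin b)}

lemma hex_of_cycle (hb : 0 < b) (hc1 : 1 ≤ c) (hcyc : σ.IsCycle)
    (hsup : σ.support = Finset.univ) :
    ∀ s : Fin b, ∃ n : ℕ, ((σ ^ (n + 1)) s).val < c := by
  intro s
  have hmove : ∀ x : Fin b, σ x ≠ x := by
    intro x
    have hx : x ∈ σ.support := by rw [hsup]; exact Finset.mem_univ x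
    exact Equiv.Perm.mem_support.mp hx
  obtain ⟨i, hi⟩ := hcyc.exists_pow_eq (hmove (σ s)) (hmove ⟨0, hb⟩)
  refine ⟨i, ?_⟩
  rw [pow_succ_apply, hi]
  exact hc1

lemma support_conj_univ (hsup : σ.support = Finset.univ) (π : Perm (Fin b)) :
    (π * σ * π⁻¹).support = Finset.univ := by
  rw [Equiv.Perm.support_conj, hsup]
  exact Finset.map_univ_equiv π

lemma conj_eq_one (hb : 0 < b) (hc1 : 1 ≤ c) (hcyc : σ.IsCycle)
    (hsup : σ.support = Finset.univ)
    (hπ : ∀ x : Fin b, x.val < c → π x = x)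
    (hI : Incr c σ) (hI' : Incr c (π * σ * π⁻¹)) : π = 1 := by
  have hex := hex_of_cycle hb hc1 hcyc hsup
  have hex' := hex_of_cycle hb hc1 hcyc.conj (support_conj_univ hsup π)
  have hmono : ∀ s t : Fin b, c ≤ s.val → c ≤ t.val → (s < t ↔ π⁻¹ s < π⁻¹ t) := by
    intro s t hs ht
    have h1 := key_iff_of_incr hex' hI' hs ht
    rw [key_conj hex hπ s, key_conj hex hπ t] at h1
    have hs' : c ≤ (π⁻¹ s).val := high_preserve (fix_inv hπ) s hs
    have ht' : c ≤ (π⁻¹ t).val := high_preserve (fix_inv hπ) t ht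
    rw [key_iff_of_incr hex hI hs' ht'] at h1
    exact h1.symm
  have hsm : StrictMono ((π⁻¹ : Perm (Fin b)) : Fin b → Fin b) := by
    intro x y hxy
    rcases lt_or_ge y.val c with hy | hy
    · have hx : x.val < c := by have := Fin.lt_def.mp hxy; omega
      rw [fix_inv hπ x hx, fix_inv hπ y hy]
      exact hxy
    · rcases lt_or_ge x.val c with hx | hx
      · rw [fix_inv hπ x hx]
        have h2 := high_preserve (fix_inv hπ) y hy
        rw [Fin.lt_def]; omega
      · exact (hmono x y hx hy).mp hxy
  have h1 : π⁻¹ = 1 := perm_eq_one_of_strictMono hsm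
  rw [← inv_inv π, h1]
  simp

end cyclefacts

section exist

variable {c : ℕ} {σ : Perm (Fin b)}

def lowShift (b c : ℕ) : Fin (b - c) ≃ {x : Fin b // c ≤ x.val} where
  toFun i := ⟨⟨c + i.val, by have := i.isLt; omega⟩, by simp⟩
  invFun x := ⟨x.val.val - c, by have := x.val.isLt; have := x.2; omega⟩
  left_inv i := by
    apply Fin.ext
    simp
  right_inv x := by
    apply Subtype.ext
    apply Fin.ext
    have := x.2
    simp
    omega

lemma lowShift_lt_iff {i j : Fin (b - c)} : lowShift b c i < lowShift b c j ↔ i < j := by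
  simp only [lowShift, Equiv.coe_fn_mk, Subtype.mk_lt_mk, Fin.lt_def]
  omega

lemma exists_incr_conj (hb : 0 < b) (hc1 : 1 ≤ c) (hcyc : σ.IsCycle)
    (hsup : σ.support = Finset.univ) :
    ∃ τ : Perm {x : Fin b // c ≤ x.val},
      Incr c (Equiv.Perm.ofSubtype τ * σ * (Equiv.Perm.ofSubtype τ)⁻¹) := by
  have hex := hex_of_cycle hb hc1 hcyc hsup
  set L := lowShift b c with hL
  set F : Fin (b - c) → ℕ ×ₗ Fin b := fun i => key c σ ((L i) : Fin b) with hF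
  have hFinj : Function.Injective F := by
    intro i j hij
    exact L.injective (Subtype.ext (key_inj hij))
  set ρ := Tuple.sort F with hρ
  have hsm : StrictMono (F ∘ ρ) :=
    (Tuple.monotone_sort F).strictMono_of_injective (hFinj.comp ρ.injective)
  set τ : Perm {x : Fin b // c ≤ x.val} := (L.symm.trans ρ.symm).trans L with hτ
  refine ⟨τ, ?_⟩
  set π := Equiv.Perm.ofSubtype τ with hπdef
  have hπ : ∀ x : Fin b, x.val < c → π x = x := by
    intro x hx
    exact Equiv.Perm.ofSubtype_apply_of_not_mem τ (by simpa using not_le.mpr hx)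
  have hπinvapp : ∀ x : Fin b, ∀ hx : c ≤ x.val,
      π⁻¹ x = ((L (ρ (L.symm ⟨x, hx⟩))) : Fin b) := by
    intro x hx
    have h1 : π⁻¹ = Equiv.Perm.ofSubtype τ⁻¹ := (map_inv Equiv.Perm.ofSubtype τ).symm
    rw [h1, Equiv.Perm.ofSubtype_apply_of_mem τ⁻¹ hx]
    have h2 : τ⁻¹ ⟨x, hx⟩ = L (ρ (L.symm ⟨x, hx⟩)) := by
      show τ.symm _ = _
      rw [hτ]
      simp
    rw [h2]
  have hex' := hex_of_cycle hb hc1 hcyc.conj (support_conj_univ hsup π)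
  apply incr_of_key_iff hex'
  intro s t hs ht
  rw [key_conj hex hπ s, key_conj hex hπ t, hπinvapp s hs, hπinvapp t ht]
  have hgoal : ∀ x : Fin (b - c), key c σ ((L (ρ x)) : Fin b) = (F ∘ ρ) x := fun x => rfl
  rw [hgoal, hgoal, hsm.lt_iff_lt]
  have hLs : ∀ x y : {x : Fin b // c ≤ x.val}, L.symm x < L.symm y ↔ x < y := by
    intro x y
    rw [← lowShift_lt_iff (b := b) (c := c), ← hL, L.apply_symm_apply, L.apply_symm_apply]
  rw [hLs]
  exact Subtype.mk_lt_mk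

end exist

section count

variable {σ : Perm (Fin b)}

lemma mem_iff_cycleType (hb : 2 ≤ b) (σ : Perm (Fin b)) :
    (σ.IsCycle ∧ σ.support = Finset.univ) ↔ σ.cycleType = {b} := by
  constructor
  · rintro ⟨hc, hs⟩
    rw [hc.cycleType, hs]
    simp
  · intro h
    have hc : σ.IsCycle := by
      rw [← Equiv.Perm.card_cycleType_eq_one, h]
      rfl
    have hcard : σ.support.card = b := by
      have := Equiv.Perm.sum_cycleType σ
      rw [h] at this
      simpa using this.symm
    exact ⟨hc, Finset.eq_univ_of_card _ (by rw [hcard, Fintype.card_fin])⟩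

lemma centralizer_full_cycle (hb : 0 < b) {c₀ : Perm (Fin b)} (hc : c₀.IsCycle)
    (hs : c₀.support = Finset.univ) :
    Subgroup.centralizer ({c₀} : Set (Perm (Fin b))) = Subgroup.zpowers c₀ := by
  have hmove : ∀ x : Fin b, c₀ x ≠ x := fun x =>
    Equiv.Perm.mem_support.mp (by rw [hs]; exact Finset.mem_univ x)
  apply le_antisymm
  · intro τ hτ
    rw [Subgroup.mem_centralizer_singleton_iff] at hτ
    have hco : Commute τ c₀ := hτ
    set x₀ : Fin b := ⟨0, hb⟩
    obtain ⟨i, hi⟩ := hc.exists_pow_eq (hmove x₀) (hmove (τ x₀))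
    rw [Subgroup.mem_zpowers_iff]
    refine ⟨(i : ℤ), ?_⟩
    rw [zpow_natCast]
    ext y
    obtain ⟨j, hj⟩ := hc.exists_pow_eq (hmove x₀) (hmove y)
    rw [← hj]
    have h2 : τ ((c₀ ^ j) x₀) = (c₀ ^ j) (τ x₀) := by
      have h1 := (hco.pow_right j).eq
      have := congrArg (fun s : Perm (Fin b) => s x₀) h1
      simpa [Equiv.Perm.mul_apply] using this
    rw [h2, ← hi, ← Equiv.Perm.mul_apply, ← Equiv.Perm.mul_apply, ← pow_add, ← pow_add,
      Nat.add_comm]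
  · apply Subgroup.zpowers_le.mpr
    rw [Subgroup.mem_centralizer_singleton_iff]

lemma card_full_cycles (hb : 2 ≤ b) :
    Nat.card {σ : Perm (Fin b) // σ.IsCycle ∧ σ.support = Finset.univ} * b
      = Nat.factorial b := by
  classical
  have hb0 : 0 < b := by omega
  set G := Perm (Fin b)
  set c₀ : G := finRotate b with hc₀def
  have hc₀ : c₀.IsCycle := isCycle_finRotate_of_le hb
  have hs₀ : c₀.support = Finset.univ := support_finRotate_of_le hb
  have htype : c₀.cycleType = {b} := (mem_iff_cycleType hb c₀).mp ⟨hc₀, hs₀⟩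
  have hmem : ∀ σ : G, (σ.IsCycle ∧ σ.support = Finset.univ)
      ↔ σ ∈ MulAction.orbit (ConjAct G) c₀ := by
    intro σ
    rw [ConjAct.mem_orbit_conjAct, Equiv.Perm.isConj_iff_cycleType_eq,
      mem_iff_cycleType hb, htype]
  have h1 : Nat.card {σ : G // σ.IsCycle ∧ σ.support = Finset.univ}
      = Nat.card (MulAction.orbit (ConjAct G) c₀) :=
    Nat.card_congr (Equiv.subtypeEquivRight hmem)
  have h2 : (MulAction.stabilizer (ConjAct G) c₀).index
      = Nat.card (MulAction.orbit (ConjAct G) c₀) := by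
    rw [MulAction.index_stabilizer]
    exact (Nat.card_coe_set_eq _).symm
  have h3 := Subgroup.index_mul_card (MulAction.stabilizer (ConjAct G) c₀)
  have hmem2 : ∀ x : ConjAct G, x ∈ MulAction.stabilizer (ConjAct G) c₀
      ↔ ConjAct.ofConjAct x ∈ Subgroup.centralizer ({c₀} : Set G) := by
    intro x
    rw [Subgroup.centralizer_eq_comap_stabilizer]
    exact Iff.rfl
  have e : MulAction.stabilizer (ConjAct G) c₀ ≃ Subgroup.centralizer ({c₀} : Set G) :=
    { toFun := fun x => ⟨ConjAct.ofConjAct x.1, (hmem2 x.1).mp x.2⟩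
      invFun := fun y => ⟨ConjAct.toConjAct y.1, (hmem2 _).mpr (by simpa using y.2)⟩
      left_inv := fun x => Subtype.ext (by simp)
      right_inv := fun y => Subtype.ext (by simp) }
  have hstab : Nat.card (MulAction.stabilizer (ConjAct G) c₀) = b := by
    rw [Nat.card_congr e, centralizer_full_cycle hb0 hc₀ hs₀, Nat.card_zpowers,
      hc₀.orderOf, hs₀, Finset.card_univ, Fintype.card_fin]
  have hG : Nat.card (ConjAct G) = Nat.factorial b := by
    rw [Nat.card_eq_fintype_card]
    show Fintype.card (Perm (Fin b)) = _
    rw [Fintype.card_perm, Fintype.card_fin]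
  calc Nat.card {σ : G // σ.IsCycle ∧ σ.support = Finset.univ} * b
      = (MulAction.stabilizer (ConjAct G) c₀).index
        * Nat.card (MulAction.stabilizer (ConjAct G) c₀) := by rw [h1, ← h2, hstab]
    _ = Nat.card (ConjAct G) := h3
    _ = Nat.factorial b := hG

end count

end Stmt14

open Equiv Stmt14 in
/-- The number of permutations `σ` of `{1,...,b}` that are a single cycle on all `b`
elements and satisfy `σ(b-k+1) < ⋯ < σ(b)` equals `(b-1)!/k!`; i.e. `k!` times this count
equals `(b-1)!`. -/
theorem stmt14 (b k : ℕ) (hb : 2 ≤ b) (hk : 1 ≤ k) (hkb : k ≤ b - 1) :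
    Nat.factorial k *
        Nat.card {σ : Equiv.Perm (Fin b) //
          σ.IsCycle ∧ σ.support = Finset.univ ∧
            ∀ i j : Fin b, b - k ≤ i.val → i < j → σ i < σ j} =
      Nat.factorial (b - 1) := by
  classical
  set c := b - k with hcdef
  have hc1 : 1 ≤ c := by omega
  have hb0 : 0 < b := by omega
  set I := {σ : Equiv.Perm (Fin b) //
      σ.IsCycle ∧ σ.support = Finset.univ ∧
        ∀ i j : Fin b, b - k ≤ i.val → i < j → σ i < σ j} with hI
  set C := {σ : Equiv.Perm (Fin b) // σ.IsCycle ∧ σ.support = Finset.univ} with hC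
  set Gk := Equiv.Perm {x : Fin b // c ≤ x.val} with hGk
  have hIncr : ∀ σ : Equiv.Perm (Fin b),
      (∀ i j : Fin b, b - k ≤ i.val → i < j → σ i < σ j) ↔ Incr c σ := by
    intro σ; rfl
  let Φ : I × Gk → C := fun p =>
    ⟨Equiv.Perm.ofSubtype p.2 * p.1.1 * (Equiv.Perm.ofSubtype p.2)⁻¹,
      p.1.2.1.conj, support_conj_univ p.1.2.2.1 _⟩
  have hbij : Function.Bijective Φ := by
    constructor
    · rintro ⟨⟨σ₁, hc₁, hs₁, hI₁⟩, τ₁⟩ ⟨⟨σ₂, hc₂, hs₂, hI₂⟩, τ₂⟩ heq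
      have heq' : Equiv.Perm.ofSubtype τ₁ * σ₁ * (Equiv.Perm.ofSubtype τ₁)⁻¹
          = Equiv.Perm.ofSubtype τ₂ * σ₂ * (Equiv.Perm.ofSubtype τ₂)⁻¹ :=
        congrArg Subtype.val heq
      set π₁ := Equiv.Perm.ofSubtype τ₁ with hπ₁
      set π₂ := Equiv.Perm.ofSubtype τ₂ with hπ₂
      set π := π₂⁻¹ * π₁ with hπd
      have hconj : π * σ₁ * π⁻¹ = σ₂ := by
        rw [hπd]
        rw [show (π₂⁻¹ * π₁) * σ₁ * (π₂⁻¹ * π₁)⁻¹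
            = π₂⁻¹ * (π₁ * σ₁ * π₁⁻¹) * π₂ by group]
        rw [heq']
        group
      have hfix : ∀ x : Fin b, x.val < c → π x = x := by
        intro x hx
        have h1 : π₁ x = x :=
          Equiv.Perm.ofSubtype_apply_of_not_mem τ₁ (by simpa using not_le.mpr hx)
        have h2 : π₂ x = x :=
          Equiv.Perm.ofSubtype_apply_of_not_mem τ₂ (by simpa using not_le.mpr hx)
        rw [hπd, Equiv.Perm.mul_apply, h1]
        calc π₂⁻¹ x = π₂⁻¹ (π₂ x) := by rw [h2]
        _ = x := π₂.symm_apply_apply x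
      have hπone : π = 1 := by
        apply conj_eq_one hb0 hc1 hc₁ hs₁ hfix ((hIncr σ₁).mp hI₁)
        rw [hconj]
        exact (hIncr σ₂).mp hI₂
      have hπeq : π₁ = π₂ := by
        have : π₂⁻¹ * π₁ = 1 := hπone
        calc π₁ = π₂ * (π₂⁻¹ * π₁) := by group
        _ = π₂ := by rw [this]; group
      have hτeq : τ₁ = τ₂ := by
        apply Equiv.ext
        intro x
        have happ : π₁ (x : Fin b) = π₂ (x : Fin b) := by rw [hπeq]
        rw [hπ₁, hπ₂, Equiv.Perm.ofSubtype_apply_of_mem τ₁ x.2,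
          Equiv.Perm.ofSubtype_apply_of_mem τ₂ x.2] at happ
        exact Subtype.ext happ
      have hσeq : σ₁ = σ₂ := by
        rw [← hconj, hπone]
        group
      cases hσeq
      cases hτeq
      rfl
    · rintro ⟨σ, hcy, hsu⟩
      obtain ⟨τ, hτ⟩ := exists_incr_conj hb0 hc1 hcy hsu
      refine ⟨⟨⟨Equiv.Perm.ofSubtype τ * σ * (Equiv.Perm.ofSubtype τ)⁻¹,
        hcy.conj, support_conj_univ hsu _, (hIncr _).mpr hτ⟩, τ⁻¹⟩, ?_⟩
      apply Subtype.ext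
      show Equiv.Perm.ofSubtype τ⁻¹ * (Equiv.Perm.ofSubtype τ * σ
        * (Equiv.Perm.ofSubtype τ)⁻¹) * (Equiv.Perm.ofSubtype τ⁻¹)⁻¹ = σ
      rw [map_inv]
      group
  have hcards : Nat.card (I × Gk) = Nat.card C := Nat.card_eq_of_bijective Φ hbij
  rw [Nat.card_prod] at hcards
  have hsub : Nat.card {x : Fin b // c ≤ x.val} = k := by
    have h := Nat.card_congr (lowShift b c)
    rw [Nat.card_eq_fintype_card (α := Fin (b - c)), Fintype.card_fin] at h
    omega
  have hpermcard : Nat.card Gk = Nat.factorial k := by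
    rw [hGk, Nat.card_eq_fintype_card, Fintype.card_perm,
      ← Nat.card_eq_fintype_card, hsub]
  have hCcard : Nat.card C * b = Nat.factorial b := card_full_cycles hb
  have hfact : Nat.factorial b = Nat.factorial (b - 1) * b := by
    conv_lhs => rw [show b = (b - 1) + 1 from by omega]
    rw [Nat.factorial_succ, Nat.mul_comm]
    congr 1
    omega
  have hCval : Nat.card C = Nat.factorial (b - 1) := by
    have := hCcard
    rw [hfact] at this
    exact Nat.eq_of_mul_eq_mul_right hb0 this
  rw [hpermcard] at hcards
  rw [Nat.mul_comm]
  rw [hcards, hCval]
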